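/- Quiescence of graded king consensus under agreement. Assume n > 3t. Consider the four-round graded king consensus protocol, which prescribes: (round 1) a correct node w with ℓ_w = some u sends x_w to node u and nothing to other nodes, and a correct node with ℓ_w = none sends nothing; (round 2) a correct node w sends x_w to all nodes iff ℓ_w = some w and it received the value x_w from at least n − t nodes in round 1; (round 3) a correct node v with ℓ_v = some ℓ' sends to all nodes the value c it received from ℓ' in round 2, provided c ≠ x_v, and otherwise sends nothing; (round 4) a correct node w sends x_w to exactly those nodes from which it received the value x_w in round 3. Suppose there are x ∈ 𝒱 and L ∈ Option (Fin n) with (x_v, ℓ_v) = (x, L) for all v ∈ H, where either L = none or L = some ℓ with ℓ ∈ H. Then in every execution, every correct node v with L ≠ some v sends no messages in rounds 2 and 3, sends messages in round 4 only to nodes outside H, and in round 1 sends a message only to ℓ (if L = some ℓ) or to nobody (if L = none). -/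
import Mathlib


/-- Number of distinct senders from which a node received the message `c`
(`recv u` is the message received from node `u`). -/
def recvCount {n : ℕ} {M : Type*} [DecidableEq M]
    (recv : Fin n → Option M) (c : M) : ℕ :=
  (Finset.univ.filter fun u => recv u = some c).card

/-- Quiescence of the four-round graded king consensus protocol under agreement:
if all correct nodes share the same input value and the same leader pointer `L`
(with `L` absent or pointing to a correct node), then every correct non-leader node
sends nothing in rounds 2 and 3, sends round-4 messages only to faulty nodes, and in
round 1 sends a message only to the leader. `H` is the set of correct nodes
(at most `t` faulty); `recvᵢ v w` is the message `v` receives from `w` in round `i`. -/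
theorem graded_king_consensus_quiescence
    {n t : ℕ} {𝒱 : Type*} [Nonempty 𝒱] [DecidableEq 𝒱]
    (hnt : 3 * t < n)
    (H : Finset (Fin n)) (hH : (Finset.univ \ H).card ≤ t)
    (x : Fin n → 𝒱) (ℓ : Fin n → Option (Fin n))
    (recv1 recv2 recv3 recv4 : Fin n → Fin n → Option 𝒱)
    (h : Fin n → Fin 2)
    -- round 1: a correct node sends its input to its leader only
    (h1 : ∀ v : Fin n, ∀ w ∈ H, recv1 v w = if ℓ w = some v then some (x w) else none)
    -- a correct node sets h = 1 iff it is its own leader and received its input n − t times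
    (hh : ∀ w ∈ H, (h w = 1 ↔ (ℓ w = some w ∧ n - t ≤ recvCount (recv1 w) (x w))))
    -- round 2: a correct node sends its input to all nodes iff h = 1
    (h2 : ∀ v : Fin n, ∀ w ∈ H, recv2 v w = if h w = 1 then some (x w) else none)
    -- round 3: a correct node forwards the value received from its leader in round 2
    -- to all nodes, provided it differs from its own input; otherwise it is silent
    (h3 : ∀ u : Fin n, ∀ v ∈ H, recv3 u v =
      match ℓ v with
      | none => none
      | some ℓ' =>
        match recv2 v ℓ' with
        | none => none
        | some c => if c = x v then none else some c)
    -- round 4: a correct node sends its input exactly to those nodes from which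
    -- it received its input in round 3
    (h4 : ∀ v : Fin n, ∀ w ∈ H, recv4 v w =
      if recv3 w v = some (x w) then some (x w) else none)
    -- all correct nodes agree on their input value and leader pointer
    (c₀ : 𝒱) (L : Option (Fin n))
    (hagree : ∀ v ∈ H, x v = c₀ ∧ ℓ v = L)
    -- the common leader pointer is absent or points to a correct node
    (hL : L = none ∨ ∃ ℓ₀ ∈ H, L = some ℓ₀) :
    ∀ v ∈ H, L ≠ some v →
      -- v sends nothing in round 2
      (∀ u : Fin n, recv2 u v = none) ∧
      -- v sends nothing in round 3
      (∀ u : Fin n, recv3 u v = none) ∧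
      -- v sends round-4 messages only to faulty nodes
      (∀ u ∈ H, recv4 u v = none) ∧
      -- v sends a round-1 message only to the leader
      (∀ u : Fin n, recv1 u v ≠ none → L = some u) := by
  -- key: any correct node w sends nothing in round 3
  have key3 : ∀ u : Fin n, ∀ w ∈ H, recv3 u w = none := by
    intro u w hw
    rw [h3 u w hw, (hagree w hw).2]
    rcases hL with hnone | ⟨ℓ₀, hℓ₀H, hLs⟩
    · simp [hnone]
    · rw [hLs]
      simp only
      rw [h2 w ℓ₀ hℓ₀H]
      by_cases hc : h ℓ₀ = 1
      · simp [hc, (hagree ℓ₀ hℓ₀H).1, (hagree w hw).1]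
      · simp [hc]
  intro v hv hLv
  refine ⟨?_, fun u => key3 u v hv, ?_, ?_⟩
  · intro u
    rw [h2 u v hv]
    have : ¬ h v = 1 := by
      intro h1'
      exact hLv (((hh v hv).1 h1').1 ▸ ((hagree v hv).2).symm)
    simp [this]
  · intro u hu
    rw [h4 u v hv, key3 v u hu]
    simp
  · intro u hne
    rw [h1 u v hv] at hne
    by_cases hc : ℓ v = some u
    · rw [← (hagree v hv).2, hc]
    · simp [hc] at hne
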